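/- arXiv:2012.01965 — 6 statements merged into one kernel-verified Lean document; each statement's English description precedes it below -/
import Mathlib

section
/- Let T > 0, let σ : ℝ → ℝ be twice differentiable and S₁, S₂ : ℝ → ℝ be differentiable. Let P₁, P₂ : ℝ × (0,T) → ℝ be functions that are twice continuously differentiable in the space variable x and continuously differentiable in the time variable t, with P₁(x,t) > 0 for all x ∈ ℝ and t ∈ (0,T). Suppose that for i = 1,2 and all x ∈ ℝ, t ∈ (0,T), the Fokker–Planck equation ∂ₜPᵢ(x,t) = −∂ₓ(Sᵢ(x)·Pᵢ(x,t)) + (1/2)·∂ₓₓ(σ(x)·Pᵢ(x,t)) holds. Then the quotient V(x,t) = P₂(x,t)/P₁(x,t) satisfies, for all x ∈ ℝ and t ∈ (0,T), the partial differential equation ∂ₜV = { (S₁′(x) − S₂′(x)) + (S₁(x) − S₂(x))·(∂ₓP₁/P₁) }·V + { σ(x)·(∂ₓP₁/P₁) + σ′(x) − S₂(x) }·∂ₓV + (1/2)·σ(x)·∂ₓₓV. -/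
/-- One-dimensional case of Theorem 3.1: if `P₁, P₂` solve the Fokker–Planck
equations associated with drifts `S₁, S₂` and common squared diffusion
coefficient `σ`, and `P₁ > 0`, then the quotient `V = P₂ / P₁` satisfies the
stated PDE. Partial derivatives in space are expressed with `deriv`, the
partial derivative in time with `HasDerivAt`. -/
theorem quotient_of_densities_pde
    (T : ℝ) (hT : 0 < T)
    (σ S₁ S₂ σ' σ'' S₁' S₂' : ℝ → ℝ)
    (hσ : ∀ x, HasDerivAt σ (σ' x) x)
    (hσ' : ∀ x, HasDerivAt σ' (σ'' x) x)
    (hS₁ : ∀ x, HasDerivAt S₁ (S₁' x) x)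
    (hS₂ : ∀ x, HasDerivAt S₂ (S₂' x) x)
    (P₁ P₂ P₁x P₁xx P₂x P₂xx P₁t P₂t : ℝ → ℝ → ℝ)
    -- spatial derivatives
    (hP₁x : ∀ x : ℝ, ∀ t ∈ Set.Ioo (0 : ℝ) T, HasDerivAt (fun y => P₁ y t) (P₁x x t) x)
    (hP₁xx : ∀ x : ℝ, ∀ t ∈ Set.Ioo (0 : ℝ) T, HasDerivAt (fun y => P₁x y t) (P₁xx x t) x)
    (hP₂x : ∀ x : ℝ, ∀ t ∈ Set.Ioo (0 : ℝ) T, HasDerivAt (fun y => P₂ y t) (P₂x x t) x)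
    (hP₂xx : ∀ x : ℝ, ∀ t ∈ Set.Ioo (0 : ℝ) T, HasDerivAt (fun y => P₂x y t) (P₂xx x t) x)
    -- continuity of second spatial derivatives (twice *continuously* differentiable in x)
    (hP₁xxc : ∀ t ∈ Set.Ioo (0 : ℝ) T, Continuous (fun y => P₁xx y t))
    (hP₂xxc : ∀ t ∈ Set.Ioo (0 : ℝ) T, Continuous (fun y => P₂xx y t))
    -- time derivatives, continuous in t
    (hP₁t : ∀ x : ℝ, ∀ t ∈ Set.Ioo (0 : ℝ) T, HasDerivAt (fun s => P₁ x s) (P₁t x t) t)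
    (hP₂t : ∀ x : ℝ, ∀ t ∈ Set.Ioo (0 : ℝ) T, HasDerivAt (fun s => P₂ x s) (P₂t x t) t)
    (hP₁tc : ∀ x : ℝ, ContinuousOn (fun s => P₁t x s) (Set.Ioo (0 : ℝ) T))
    (hP₂tc : ∀ x : ℝ, ContinuousOn (fun s => P₂t x s) (Set.Ioo (0 : ℝ) T))
    -- positivity of the reference density
    (hP₁pos : ∀ x : ℝ, ∀ t ∈ Set.Ioo (0 : ℝ) T, 0 < P₁ x t)
    -- Fokker–Planck equations: ∂ₜPᵢ = −∂ₓ(Sᵢ Pᵢ) + (1/2) ∂ₓₓ(σ Pᵢ)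
    (hFP₁ : ∀ x : ℝ, ∀ t ∈ Set.Ioo (0 : ℝ) T,
      P₁t x t = -(S₁' x * P₁ x t + S₁ x * P₁x x t)
        + (1 / 2) * (σ'' x * P₁ x t + 2 * σ' x * P₁x x t + σ x * P₁xx x t))
    (hFP₂ : ∀ x : ℝ, ∀ t ∈ Set.Ioo (0 : ℝ) T,
      P₂t x t = -(S₂' x * P₂ x t + S₂ x * P₂x x t)
        + (1 / 2) * (σ'' x * P₂ x t + 2 * σ' x * P₂x x t + σ x * P₂xx x t)) :
    ∀ x : ℝ, ∀ t ∈ Set.Ioo (0 : ℝ) T,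
      HasDerivAt (fun s => P₂ x s / P₁ x s)
        ( ((S₁' x - S₂' x) + (S₁ x - S₂ x) * (P₁x x t / P₁ x t)) * (P₂ x t / P₁ x t)
          + (σ x * (P₁x x t / P₁ x t) + σ' x - S₂ x)
              * deriv (fun y => P₂ y t / P₁ y t) x
          + (1 / 2) * σ x * deriv (deriv (fun y => P₂ y t / P₁ y t)) x ) t := by
  intro x t ht
  have hne : ∀ y : ℝ, P₁ y t ≠ 0 := fun y => (hP₁pos y t ht).ne'
  -- first spatial derivative of V
  have hVx : ∀ y : ℝ, HasDerivAt (fun y => P₂ y t / P₁ y t)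
      ((P₂x y t * P₁ y t - P₂ y t * P₁x y t) / (P₁ y t) ^ 2) y :=
    fun y => (hP₂x y t ht).div (hP₁x y t ht) (hne y)
  have hdV : deriv (fun y => P₂ y t / P₁ y t)
      = fun y => (P₂x y t * P₁ y t - P₂ y t * P₁x y t) / (P₁ y t) ^ 2 :=
    funext fun y => (hVx y).deriv
  -- second spatial derivative
  have hnum : HasDerivAt (fun y => P₂x y t * P₁ y t - P₂ y t * P₁x y t)
      (P₂xx x t * P₁ x t + P₂x x t * P₁x x t
        - (P₂x x t * P₁x x t + P₂ x t * P₁xx x t)) x :=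
    ((hP₂xx x t ht).mul (hP₁x x t ht)).sub ((hP₂x x t ht).mul (hP₁xx x t ht))
  have hden : HasDerivAt (fun y => (P₁ y t) ^ 2) (2 * P₁ x t * P₁x x t) x := by
    have := (hP₁x x t ht).fun_pow 2
    simpa [pow_one, mul_comm, mul_assoc, mul_left_comm] using this
  have hVxx : HasDerivAt (fun y => (P₂x y t * P₁ y t - P₂ y t * P₁x y t) / (P₁ y t) ^ 2)
      (((P₂xx x t * P₁ x t + P₂x x t * P₁x x t
          - (P₂x x t * P₁x x t + P₂ x t * P₁xx x t)) * (P₁ x t) ^ 2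
        - (P₂x x t * P₁ x t - P₂ x t * P₁x x t) * (2 * P₁ x t * P₁x x t))
        / ((P₁ x t) ^ 2) ^ 2) x :=
    hnum.div hden (pow_ne_zero 2 (hne x))
  have hddV : deriv (deriv (fun y => P₂ y t / P₁ y t)) x
      = ((P₂xx x t * P₁ x t + P₂x x t * P₁x x t
          - (P₂x x t * P₁x x t + P₂ x t * P₁xx x t)) * (P₁ x t) ^ 2
        - (P₂x x t * P₁ x t - P₂ x t * P₁x x t) * (2 * P₁ x t * P₁x x t))
        / ((P₁ x t) ^ 2) ^ 2 := by
    rw [hdV]; exact hVxx.deriv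
  have hdVx : deriv (fun y => P₂ y t / P₁ y t) x
      = (P₂x x t * P₁ x t - P₂ x t * P₁x x t) / (P₁ x t) ^ 2 := (hVx x).deriv
  -- time derivative
  have hVt : HasDerivAt (fun s => P₂ x s / P₁ x s)
      ((P₂t x t * P₁ x t - P₂ x t * P₁t x t) / (P₁ x t) ^ 2) t :=
    (hP₂t x t ht).div (hP₁t x t ht) (hne x)
  have key : (P₂t x t * P₁ x t - P₂ x t * P₁t x t) / (P₁ x t) ^ 2
      = ((S₁' x - S₂' x) + (S₁ x - S₂ x) * (P₁x x t / P₁ x t)) * (P₂ x t / P₁ x t)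
        + (σ x * (P₁x x t / P₁ x t) + σ' x - S₂ x)
            * deriv (fun y => P₂ y t / P₁ y t) x
        + (1 / 2) * σ x * deriv (deriv (fun y => P₂ y t / P₁ y t)) x := by
    rw [hddV, hdVx, hFP₁ x t ht, hFP₂ x t ht]
    have h0 := hne x
    field_simp
    ring
  rw [key] at hVt
  exact hVt
end

section
/- Let n ≥ 1, let S and T be open subsets of ℝⁿ, and let g : S → T be a bijection such that g is continuously differentiable on S and its inverse h : T → S is continuously differentiable on T. Let f : ℝⁿ → [0,∞) be a measurable function vanishing outside S, and let μ be the measure on ℝⁿ with density f with respect to Lebesgue measure (so μ is concentrated on S). Then the pushforward of μ under g has density with respect to Lebesgue measure given by y ↦ f(h(y))·|det Dh(y)| for y ∈ T and 0 for y ∉ T, where Dh(y) denotes the (Fréchet) derivative of h at y. -/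
open MeasureTheory Classical in

/-- Transformation theorem (Theorem 4.1 of the paper, after Gut): if `μ` is the
measure on `ℝⁿ` with density `f` (vanishing outside the open set `S`), and
`g : S → T` is a bijection which is `C¹` on `S` with `C¹` inverse `h` on the
open set `T`, then the pushforward of `μ` under `g` has density
`y ↦ f(h(y))·|det Dh(y)|` on `T` and `0` off `T`. -/
theorem transformation_theorem
    {n : ℕ} (hn : 1 ≤ n)
    (S T : Set (Fin n → ℝ)) (hS : IsOpen S) (hT : IsOpen T)
    (g h : (Fin n → ℝ) → (Fin n → ℝ))
    (hbij : Set.BijOn g S T)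
    (hinv : Set.InvOn h g S T)
    (hg : ContDiffOn ℝ 1 g S) (hh : ContDiffOn ℝ 1 h T)
    (h' : (Fin n → ℝ) → ((Fin n → ℝ) →L[ℝ] (Fin n → ℝ)))
    (hh' : ∀ y ∈ T, HasFDerivAt h (h' y) y)
    (f : (Fin n → ℝ) → ℝ)
    (hfmeas : Measurable f) (hf0 : ∀ x, 0 ≤ f x)
    (hfS : ∀ x ∉ S, f x = 0) :
    (volume.withDensity (fun x => ENNReal.ofReal (f x))).map g
      = volume.withDensity
          (fun y => if y ∈ T then ENNReal.ofReal (f (h y) * |(h' y).det|) else 0) := by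
  set μ := volume.withDensity (fun x => ENNReal.ofReal (f x)) with hμ
  have hbij' : Set.BijOn h T S := hbij.symm hinv.symm
  -- μ vanishes off S
  have hμS : μ Sᶜ = 0 := by
    rw [hμ, withDensity_apply _ hS.measurableSet.compl]
    rw [setLIntegral_congr_fun hS.measurableSet.compl
      (fun x hx => by
        simp [hfS x hx] : ∀ x ∈ Sᶜ, ENNReal.ofReal (f x) = (0 : ENNReal))]
    simp
  have haemem : ∀ᵐ x ∂μ, x ∈ S := by
    rw [Filter.eventually_iff, mem_ae_iff]
    simpa using hμS
  have haem : AEMeasurable g μ := by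
    rw [← Measure.restrict_eq_self_of_ae_mem haemem]
    exact hg.continuousOn.aemeasurable hS.measurableSet
  ext A hA
  rw [Measure.map_apply_of_aemeasurable haem hA, withDensity_apply _ hA]
  -- restrict to S
  have h1 : μ (g ⁻¹' A) = μ ((g ⁻¹' A) ∩ S) := (measure_inter_conull hμS).symm
  -- the set identity
  have h2 : (g ⁻¹' A) ∩ S = h '' (A ∩ T) := by
    ext x
    constructor
    · rintro ⟨hxA, hxS⟩
      exact ⟨g x, ⟨hxA, hbij.mapsTo hxS⟩, hinv.1 hxS⟩
    · rintro ⟨y, ⟨hyA, hyT⟩, rfl⟩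
      refine ⟨?_, hbij'.mapsTo hyT⟩
      show g (h y) ∈ A
      rw [hinv.2 hyT]
      exact hyA
  have hAT : MeasurableSet (A ∩ T) := hA.inter hT.measurableSet
  have himg : MeasurableSet (h '' (A ∩ T)) :=
    hAT.image_of_continuousOn_injOn
      (hh.continuousOn.mono Set.inter_subset_right)
      (hbij'.injOn.mono Set.inter_subset_right)
  have hderiv : ∀ y ∈ A ∩ T, HasFDerivWithinAt h (h' y) (A ∩ T) y :=
    fun y hy => (hh' y hy.2).hasFDerivWithinAt
  rw [h1, h2, hμ, withDensity_apply _ himg,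
    lintegral_image_eq_lintegral_abs_det_fderiv_mul volume hAT hderiv
      (hbij'.injOn.mono Set.inter_subset_right) (fun x => ENNReal.ofReal (f x))]
  -- now the right-hand side
  have : ∀ y, (if y ∈ T then ENNReal.ofReal (f (h y) * |(h' y).det|) else 0)
      = T.indicator (fun y => ENNReal.ofReal (f (h y) * |(h' y).det|)) y := by
    intro y; simp [Set.indicator_apply]
  simp only [this]
  rw [lintegral_indicator hT.measurableSet, Measure.restrict_restrict hT.measurableSet,
    Set.inter_comm T A]
  refine setLIntegral_congr_fun hAT (fun y _ => ?_)
  rw [ENNReal.ofReal_mul (hf0 _), mul_comm]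
end

section
/- Let ρ ∈ (−1,1), v > 0 and μ₁, μ₂ ∈ ℝ. Let φ : ℝ² → ℝ be the bivariate Gaussian density φ(x₁,x₂) = (1/(2πv√(1−ρ²))) · exp( −[ (x₁−μ₁)² + (x₂−μ₂)² − 2ρ(x₁−μ₁)(x₂−μ₂) ] / (2v(1−ρ²)) ), and let ν be the measure on ℝ² with density φ with respect to Lebesgue measure. Let g(x) = 1/(1+e^{−x}) be the sigmoid map. Then the pushforward of ν under the map (x₁,x₂) ↦ (g(x₁), g(x₂)) has density with respect to Lebesgue measure on ℝ² given by (y₁,y₂) ↦ (1/(2πv√(1−ρ²))) · (1/( y₁(1−y₁)·y₂(1−y₂) )) · exp( −[ (β(y₁)−μ₁)² + (β(y₂)−μ₂)² − 2ρ(β(y₁)−μ₁)(β(y₂)−μ₂) ] / (2v(1−ρ²)) ) for (y₁,y₂) ∈ (0,1)², and 0 otherwise, where β(y) = log(y/(1−y)). -/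
open MeasureTheory Real Set Classical
open scoped ENNReal

noncomputable section SigmoidAux

private def sg (x : ℝ) : ℝ := 1 / (1 + Real.exp (-x))

private lemma one_add_exp_pos (x : ℝ) : (0:ℝ) < 1 + Real.exp (-x) := by positivity

private lemma sg_mem (x : ℝ) : sg x ∈ Set.Ioo (0:ℝ) 1 := by
  constructor
  · unfold sg; positivity
  · unfold sg
    rw [div_lt_one (one_add_exp_pos x)]
    linarith [Real.exp_pos (-x)]

private lemma one_sub_sg (x : ℝ) : 1 - sg x = Real.exp (-x) / (1 + Real.exp (-x)) := by
  unfold sg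
  field_simp
  ring

private lemma sg_div (x : ℝ) : sg x / (1 - sg x) = Real.exp x := by
  rw [one_sub_sg]
  unfold sg
  rw [Real.exp_neg]
  have h1 : Real.exp x ≠ 0 := (Real.exp_pos x).ne'
  have h2 : (1:ℝ) + (Real.exp x)⁻¹ ≠ 0 := by
    rw [← Real.exp_neg]; exact (one_add_exp_pos x).ne'
  field_simp

private lemma logit_sg (x : ℝ) : Real.log (sg x / (1 - sg x)) = x := by
  rw [sg_div, Real.log_exp]

private lemma hasDerivAt_sg (x : ℝ) : HasDerivAt sg (sg x * (1 - sg x)) x := by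
  have h1 : HasDerivAt (fun y : ℝ => 1 + Real.exp (-y)) (-Real.exp (-x)) x := by
    have h0 : HasDerivAt (fun y : ℝ => Real.exp (-y)) (Real.exp (-x) * (-1)) x :=
      (Real.hasDerivAt_exp (-x)).comp x (hasDerivAt_neg x)
    simpa using h0.const_add 1
  have h2 : HasDerivAt (fun y : ℝ => (1 + Real.exp (-y))⁻¹) _ x := h1.inv (one_add_exp_pos x).ne'
  have hg : sg = fun y : ℝ => (1 + Real.exp (-y))⁻¹ := by
    funext y; simp [sg, one_div]
  rw [hg]
  convert h2 using 1
  have h3 : (1:ℝ) + Real.exp (-x) ≠ 0 := (one_add_exp_pos x).ne'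
  simp only
  field_simp
  ring

private lemma strictMono_sg : StrictMono sg :=
  strictMono_of_hasDerivAt_pos hasDerivAt_sg fun x =>
    mul_pos (sg_mem x).1 (by linarith [(sg_mem x).2])

private lemma continuous_sg : Continuous sg := by
  unfold sg
  exact continuous_const.div (by continuity) fun x => (one_add_exp_pos x).ne'

private lemma range_sg : Set.range sg = Set.Ioo (0:ℝ) 1 := by
  ext y
  constructor
  · rintro ⟨x, rfl⟩; exact sg_mem x
  · rintro ⟨hy0, hy1⟩
    refine ⟨Real.log (y / (1 - y)), ?_⟩
    have h1 : (0:ℝ) < 1 - y := by linarith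
    have h2 : (0:ℝ) < y / (1 - y) := div_pos hy0 h1
    unfold sg
    rw [← Real.log_inv, Real.exp_log (by positivity), inv_div]
    field_simp
    ring

private lemma map_sg_withDensity :
    Measure.map sg (volume.withDensity fun x => ENNReal.ofReal (sg x * (1 - sg x)))
      = volume.restrict (Set.Ioo (0:ℝ) 1) := by
  have h := map_withDensity_abs_det_fderiv_eq_addHaar (volume : Measure ℝ)
    MeasurableSet.univ.nullMeasurableSet
    (f := sg) (f' := fun x => (1 : ℝ →L[ℝ] ℝ).smulRight (sg x * (1 - sg x)))
    (fun x _ => (hasDerivAt_sg x).hasFDerivAt.hasFDerivWithinAt)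
    strictMono_sg.injective.injOn
  simp only [Measure.restrict_univ, Set.image_univ, range_sg,
    ContinuousLinearMap.smulRight_one_eq_toSpanSingleton, ContinuousLinearMap.det_toSpanSingleton] at h
  have he : (fun x => ENNReal.ofReal |sg x * (1 - sg x)|)
      = fun x => ENNReal.ofReal (sg x * (1 - sg x)) := funext fun x => by
    rw [abs_of_pos (mul_pos (sg_mem x).1 (by linarith [(sg_mem x).2]))]
  rw [he] at h
  exact h

private lemma withDensity_prod_volume (f h : ℝ → ℝ≥0∞) (hf : Measurable f) (hh : Measurable h)
    [SigmaFinite (volume.withDensity f)] [SigmaFinite (volume.withDensity h)] :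
    (volume.withDensity f).prod (volume.withDensity h)
      = (volume : Measure (ℝ × ℝ)).withDensity (fun p => f p.1 * h p.2) := by
  refine Measure.prod_eq (μ := volume.withDensity f) (ν := volume.withDensity h)
    fun s t hs ht => ?_
  rw [Measure.volume_eq_prod, withDensity_apply _ (hs.prod ht), ← Measure.prod_restrict,
    lintegral_prod_mul hf.aemeasurable hh.aemeasurable,
    withDensity_apply _ hs, withDensity_apply _ ht]

private lemma map_withDensity_comp {α β : Type*} [MeasurableSpace α] [MeasurableSpace β]
    (ν : Measure α) {F : α → β} (hF : Measurable F) {k : β → ℝ≥0∞} (hk : Measurable k) :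
    (ν.withDensity (fun x => k (F x))).map F = (ν.map F).withDensity k := by
  ext s hs
  rw [Measure.map_apply hF hs, withDensity_apply _ (hF hs), withDensity_apply _ hs,
    setLIntegral_map hs hk hF]

private lemma sigmoid_pushforward_helper (c : ℝ) (ψ : ℝ × ℝ → ℝ) (hψ : Continuous ψ) :
    ((volume : Measure (ℝ × ℝ)).withDensity
        (fun p => ENNReal.ofReal (c * Real.exp (ψ p)))).map
      (fun p => (sg p.1, sg p.2))
      = (volume : Measure (ℝ × ℝ)).withDensity
          (fun q => if q.1 ∈ Set.Ioo (0 : ℝ) 1 ∧ q.2 ∈ Set.Ioo (0 : ℝ) 1 then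
              ENNReal.ofReal
                (c * (1 / (q.1 * (1 - q.1) * (q.2 * (1 - q.2))))
                  * Real.exp (ψ (Real.log (q.1 / (1 - q.1)), Real.log (q.2 / (1 - q.2)))))
            else 0) := by
  have hgm : Measurable sg := continuous_sg.measurable
  set d : ℝ → ℝ≥0∞ := fun x => ENNReal.ofReal (sg x * (1 - sg x)) with hd_def
  have hd : Measurable d := ENNReal.measurable_ofReal.comp
    (continuous_sg.mul (continuous_const.sub continuous_sg)).measurable
  haveI hsf : SigmaFinite (volume.withDensity d) := by
    rw [hd_def]; infer_instance
  set G : ℝ × ℝ → ℝ × ℝ := fun p => (sg p.1, sg p.2) with hG_def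
  have hGm : Measurable G := (hgm.comp measurable_fst).prodMk (hgm.comp measurable_snd)
  set k : ℝ × ℝ → ℝ≥0∞ := fun q => if q.1 ∈ Set.Ioo (0 : ℝ) 1 ∧ q.2 ∈ Set.Ioo (0 : ℝ) 1 then
      ENNReal.ofReal
        (c * (1 / (q.1 * (1 - q.1) * (q.2 * (1 - q.2))))
          * Real.exp (ψ (Real.log (q.1 / (1 - q.1)), Real.log (q.2 / (1 - q.2)))))
      else 0 with hk_def
  have hSmeas : MeasurableSet {q : ℝ × ℝ | q.1 ∈ Set.Ioo (0:ℝ) 1 ∧ q.2 ∈ Set.Ioo (0:ℝ) 1} :=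
    (measurableSet_Ioo (a := (0:ℝ)) (b := 1)).prod measurableSet_Ioo
  have hk : Measurable k := by
    have h1 : Measurable fun q : ℝ × ℝ => c * (1 / (q.1 * (1 - q.1) * (q.2 * (1 - q.2)))) :=
      measurable_const.mul (measurable_const.div
        (((measurable_fst.mul (measurable_const.sub measurable_fst))).mul
          ((measurable_snd.mul (measurable_const.sub measurable_snd)))))
    have h2 : Measurable fun q : ℝ × ℝ =>
        Real.exp (ψ (Real.log (q.1 / (1 - q.1)), Real.log (q.2 / (1 - q.2)))) :=
      Real.measurable_exp.comp (hψ.measurable.comp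
        ((Real.measurable_log.comp (measurable_fst.div (measurable_const.sub measurable_fst))).prodMk
          (Real.measurable_log.comp (measurable_snd.div (measurable_const.sub measurable_snd)))))
    exact Measurable.ite hSmeas (ENNReal.measurable_ofReal.comp (h1.mul h2)) measurable_const
  have key : ∀ p : ℝ × ℝ, ENNReal.ofReal (c * Real.exp (ψ p)) = d p.1 * d p.2 * k (G p) := by
    intro p
    have h1 := sg_mem p.1
    have h2 := sg_mem p.2
    have hd1 : (0:ℝ) < sg p.1 * (1 - sg p.1) := mul_pos h1.1 (by linarith [h1.2])
    have hd2 : (0:ℝ) < sg p.2 * (1 - sg p.2) := mul_pos h2.1 (by linarith [h2.2])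
    rw [hk_def, hG_def]
    simp only
    rw [if_pos ⟨h1, h2⟩, logit_sg, logit_sg, Prod.mk.eta, hd_def]
    simp only
    rw [← ENNReal.ofReal_mul hd1.le, ← ENNReal.ofReal_mul (by positivity)]
    congr 1
    field_simp [h1.1.ne', h2.1.ne', (sub_pos.2 h1.2).ne', (sub_pos.2 h2.2).ne']
  have step1 : (fun p : ℝ × ℝ => ENNReal.ofReal (c * Real.exp (ψ p)))
      = (fun p : ℝ × ℝ => d p.1 * d p.2) * (fun p => k (G p)) := by
    funext p
    rw [Pi.mul_apply]
    exact key p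
  have hJ : Measurable fun p : ℝ × ℝ => d p.1 * d p.2 :=
    (hd.comp measurable_fst).mul (hd.comp measurable_snd)
  have hkG : Measurable fun p : ℝ × ℝ => k (G p) := hk.comp hGm
  rw [step1, withDensity_mul _ hJ hkG, map_withDensity_comp _ hGm hk]
  have step3 : ((volume : Measure (ℝ × ℝ)).withDensity fun p => d p.1 * d p.2).map G
      = volume.restrict (Set.Ioo (0:ℝ) 1 ×ˢ Set.Ioo (0:ℝ) 1) := by
    have hGP : G = Prod.map sg sg := rfl
    rw [← withDensity_prod_volume d d hd hd, hGP,
      ← Measure.map_prod_map _ _ hgm hgm, hd_def, map_sg_withDensity,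
      Measure.prod_restrict, ← Measure.volume_eq_prod]
  rw [step3, ← withDensity_indicator ((measurableSet_Ioo (a := (0:ℝ)) (b := 1)).prod measurableSet_Ioo)]
  congr 1
  funext q
  by_cases hq : q ∈ Set.Ioo (0:ℝ) 1 ×ˢ Set.Ioo (0:ℝ) 1
  · rw [Set.indicator_of_mem hq]
  · rw [Set.indicator_of_notMem hq, hk_def]
    have : ¬(q.1 ∈ Set.Ioo (0:ℝ) 1 ∧ q.2 ∈ Set.Ioo (0:ℝ) 1) := hq
    simp only [this, if_false]

end SigmoidAux

open MeasureTheory Real Classical in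
/-- The coordinatewise sigmoid transform of a bivariate Gaussian with common
variance `v` and correlation `ρ` has the stated density on `(0,1)²`, where
`β(y) = log(y/(1−y))` is the logit function. -/
theorem sigmoid_pushforward_bivariate_gaussian
    (ρ v μ₁ μ₂ : ℝ) (hρ₁ : -1 < ρ) (hρ₂ : ρ < 1) (hv : 0 < v) :
    ((volume : Measure (ℝ × ℝ)).withDensity
        (fun p => ENNReal.ofReal
          ((1 / (2 * π * v * Real.sqrt (1 - ρ ^ 2)))
            * Real.exp (-((p.1 - μ₁) ^ 2 + (p.2 - μ₂) ^ 2
                - 2 * ρ * (p.1 - μ₁) * (p.2 - μ₂)) / (2 * v * (1 - ρ ^ 2)))))).map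
      (fun p => (1 / (1 + Real.exp (-p.1)), 1 / (1 + Real.exp (-p.2))))
      = (volume : Measure (ℝ × ℝ)).withDensity
          (fun q => if q.1 ∈ Set.Ioo (0 : ℝ) 1 ∧ q.2 ∈ Set.Ioo (0 : ℝ) 1 then
              ENNReal.ofReal
                ((1 / (2 * π * v * Real.sqrt (1 - ρ ^ 2)))
                  * (1 / (q.1 * (1 - q.1) * (q.2 * (1 - q.2))))
                  * Real.exp (-((Real.log (q.1 / (1 - q.1)) - μ₁) ^ 2
                      + (Real.log (q.2 / (1 - q.2)) - μ₂) ^ 2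
                      - 2 * ρ * (Real.log (q.1 / (1 - q.1)) - μ₁)
                          * (Real.log (q.2 / (1 - q.2)) - μ₂))
                      / (2 * v * (1 - ρ ^ 2))))
            else 0) := by
  have h := sigmoid_pushforward_helper (1 / (2 * π * v * Real.sqrt (1 - ρ ^ 2)))
    (fun p : ℝ × ℝ => -((p.1 - μ₁) ^ 2 + (p.2 - μ₂) ^ 2
        - 2 * ρ * (p.1 - μ₁) * (p.2 - μ₂)) / (2 * v * (1 - ρ ^ 2)))
    (by fun_prop)
  exact h
end

section
/- Let f : (0,1) → ℝ be defined by f(x) = 1/(1 + e^{−arcsin(2x−1)}). Then for every x ∈ (0,1), f is differentiable at x and √(x(1−x)) · f′(x) = f(x)·(1 − f(x)). -/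
/-- For `f(x) = 1/(1+e^{−arcsin(2x−1)})` and `x ∈ (0,1)`, `f` is differentiable
at `x` and `√(x(1−x))·f′(x) = f(x)(1−f(x))` — the diffusion-coefficient matching
used to transform the Wright–Fisher diffusion. -/
theorem wright_fisher_transform_derivative
    (f : ℝ → ℝ) (hf : ∀ x, f x = 1 / (1 + Real.exp (-(Real.arcsin (2 * x - 1))))) :
    ∀ x ∈ Set.Ioo (0 : ℝ) 1,
      ∃ d : ℝ, HasDerivAt f d x ∧ Real.sqrt (x * (1 - x)) * d = f x * (1 - f x) := by
  intro x hx
  obtain ⟨hx0, hx1⟩ := hx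
  have h1 : -1 < 2 * x - 1 := by linarith
  have h2 : 2 * x - 1 < 1 := by linarith
  -- derivative of inner function 2x-1
  have hin : HasDerivAt (fun x : ℝ => 2 * x - 1) 2 x := by
    simpa using ((hasDerivAt_id x).const_mul 2).sub_const 1
  have harcsin : HasDerivAt (fun x : ℝ => Real.arcsin (2 * x - 1))
      (1 / Real.sqrt (1 - (2 * x - 1) ^ 2) * 2) x :=
    by have := (Real.hasDerivAt_arcsin (ne_of_gt h1) (ne_of_lt h2)).comp x hin; exact this
  set u := Real.arcsin (2 * x - 1) with hu
  set s := Real.exp (-u) with hs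
  have hexp : HasDerivAt (fun x : ℝ => Real.exp (-(Real.arcsin (2 * x - 1))))
      (s * -(1 / Real.sqrt (1 - (2 * x - 1) ^ 2) * 2)) x := by
    simpa [hs, hu] using (harcsin.neg).exp
  have hden : (1 : ℝ) + s ≠ 0 := by positivity
  have hadd : HasDerivAt (fun x : ℝ => 1 + Real.exp (-(Real.arcsin (2 * x - 1))))
      (s * -(1 / Real.sqrt (1 - (2 * x - 1) ^ 2) * 2)) x := hexp.const_add 1
  have hinv := hadd.inv hden
  have hfd : HasDerivAt f
      (-(s * -(1 / Real.sqrt (1 - (2 * x - 1) ^ 2) * 2)) / (1 + s) ^ 2) x := by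
    have : f = fun x => (1 + Real.exp (-(Real.arcsin (2 * x - 1))))⁻¹ := by
      funext y; rw [hf y, one_div]
    rw [this]
    exact hinv
  refine ⟨_, hfd, ?_⟩
  -- algebraic identity
  have hroot : Real.sqrt (1 - (2 * x - 1) ^ 2) = 2 * Real.sqrt (x * (1 - x)) := by
    have : 1 - (2 * x - 1) ^ 2 = 4 * (x * (1 - x)) := by ring
    rw [this, show (4 : ℝ) * (x * (1 - x)) = 2 ^ 2 * (x * (1 - x)) by ring,
      Real.sqrt_mul (by positivity), Real.sqrt_sq (by norm_num)]
  have hsq : Real.sqrt (x * (1 - x)) > 0 := Real.sqrt_pos.2 (by nlinarith)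
  have hfx : f x = 1 / (1 + s) := by rw [hf x]
  rw [hfx, hroot]
  have hspos : (0 : ℝ) < s := Real.exp_pos _
  set r := Real.sqrt (x * (1 - x)) with hr
  clear_value r
  field_simp
  ring
end

section
/- Let β > 0, σ > 0 and x₀ ∈ ℝ. For t > 0 define μ₁ = x₀, σ₁²(t) = σ²t, μ₂(t) = x₀e^{−βt}, σ₂²(t) = (σ²/(2β))·(1 − e^{−2βt}), and let P₁(x,t) and P₂(x,t) be the Gaussian probability densities in x with mean μ₁ and variance σ₁²(t), respectively mean μ₂(t) and variance σ₂²(t). Then the quotient V(x,t) = P₂(x,t)/P₁(x,t) satisfies, for all x ∈ ℝ and t > 0, the partial differential equation ∂ₜV(x,t) = (β/σ₁²(t))·( σ₁²(t) − x·(x − x₀) )·V(x,t) + ( (β − σ²/σ₁²(t))·x + σ²x₀/σ₁²(t) )·∂ₓV(x,t) + (σ²/2)·∂ₓₓV(x,t). -/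
open Real

private lemma exp_quad_hasDerivAt (a m y : ℝ) :
    HasDerivAt (fun z : ℝ => Real.exp (-(z - m) ^ 2 / a))
      (Real.exp (-(y - m) ^ 2 / a) * (-(2 * (y - m)) / a)) y := by
  have h := ((((hasDerivAt_id y).sub_const m).pow 2).neg.div_const a).exp
  convert h using 1
  · simp
  norm_num

set_option maxHeartbeats 2000000 in
open Real in
/-- The paper's Proposition (Section 4.2): the quotient `V = P₂/P₁` of the
Ornstein–Uhlenbeck transition density `P₂` over the Wiener transition density
`P₁` satisfies the quotient-of-densities PDE
`∂ₜV = (β/σ₁²)(σ₁² − x(x−x₀))·V + ((β − σ²/σ₁²)x + σ²x₀/σ₁²)·∂ₓV + (σ²/2)·∂ₓₓV`,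
with `σ₁² = σ²t`. -/
theorem ou_quotient_pde
    (β σ x₀ : ℝ) (hβ : 0 < β) (hσ : 0 < σ)
    (P₁ P₂ : ℝ → ℝ → ℝ)
    (hP₁ : ∀ x t, P₁ x t
      = (1 / Real.sqrt (2 * π * (σ ^ 2 * t)))
          * Real.exp (-(x - x₀) ^ 2 / (2 * (σ ^ 2 * t))))
    (hP₂ : ∀ x t, P₂ x t
      = (1 / Real.sqrt (2 * π * (σ ^ 2 / (2 * β) * (1 - Real.exp (-2 * β * t)))))
          * Real.exp (-(x - x₀ * Real.exp (-β * t)) ^ 2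
              / (2 * (σ ^ 2 / (2 * β) * (1 - Real.exp (-2 * β * t)))))) :
    ∀ (x t : ℝ), 0 < t →
      HasDerivAt (fun s => P₂ x s / P₁ x s)
        ( (β / (σ ^ 2 * t)) * ((σ ^ 2 * t) - x * (x - x₀)) * (P₂ x t / P₁ x t)
          + ((β - σ ^ 2 / (σ ^ 2 * t)) * x + σ ^ 2 * x₀ / (σ ^ 2 * t))
              * deriv (fun y => P₂ y t / P₁ y t) x
          + (σ ^ 2 / 2) * deriv (deriv (fun y => P₂ y t / P₁ y t)) x ) t := by
  intro x t ht
  have hσ2 : (0:ℝ) < σ ^ 2 := by positivity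
  have hA : (0:ℝ) < σ ^ 2 * t := mul_pos hσ2 ht
  set E : ℝ := Real.exp (-β * t) with hEdef
  have hE0 : 0 < E := Real.exp_pos _
  have hE1 : E < 1 := by
    have h : Real.exp (-β * t) < Real.exp 0 := Real.exp_lt_exp.mpr (by nlinarith)
    simpa [hEdef] using h
  have hEE : Real.exp (-2 * β * t) = E * E := by
    rw [hEdef, ← Real.exp_add]; ring_nf
  have h1mE : (0:ℝ) < 1 - E * E := by nlinarith
  set B : ℝ := σ ^ 2 / (2 * β) * (1 - Real.exp (-2 * β * t)) with hBdef
  clear_value E B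
  have hBE : B = σ ^ 2 / (2 * β) * (1 - E * E) := by rw [hBdef, hEE]
  have hB : 0 < B := by rw [hBE]; exact mul_pos (by positivity) h1mE
  have h2πA : (0:ℝ) < 2 * π * (σ ^ 2 * t) := by
    have := Real.pi_pos; positivity
  have h2πB : (0:ℝ) < 2 * π * B := by
    have := Real.pi_pos; positivity
  have hsA : (0:ℝ) < Real.sqrt (2 * π * (σ ^ 2 * t)) := Real.sqrt_pos.mpr h2πA
  have hsB : (0:ℝ) < Real.sqrt (2 * π * B) := Real.sqrt_pos.mpr h2πB
  have hP1pos : ∀ y, 0 < P₁ y t := by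
    intro y
    rw [hP₁]
    exact mul_pos (by positivity) (Real.exp_pos _)
  -- spatial derivative of P₂
  have hnum : ∀ y : ℝ, HasDerivAt (fun z => P₂ z t)
      (P₂ y t * (-(y - x₀ * E) / B)) y := by
    intro y
    simp only [hP₂, ← hBdef, ← hEdef]
    have h := (exp_quad_hasDerivAt (2 * B) (x₀ * E) y).const_mul
      (1 / Real.sqrt (2 * π * B))
    refine h.congr_deriv ?_
    symm
    field_simp
  -- spatial derivative of P₁
  have hden : ∀ y : ℝ, HasDerivAt (fun z => P₁ z t)
      (P₁ y t * (-(y - x₀) / (σ ^ 2 * t))) y := by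
    intro y
    simp only [hP₁]
    have h := (exp_quad_hasDerivAt (2 * (σ ^ 2 * t)) x₀ y).const_mul
      (1 / Real.sqrt (2 * π * (σ ^ 2 * t)))
    refine h.congr_deriv ?_
    symm
    field_simp
  -- spatial derivative of the quotient
  have hDx : ∀ y : ℝ, HasDerivAt (fun z => P₂ z t / P₁ z t)
      ((P₂ y t / P₁ y t) * ((y - x₀) / (σ ^ 2 * t) - (y - x₀ * E) / B)) y := by
    intro y
    have h := (hnum y).div (hden y) (hP1pos y).ne'
    refine h.congr_deriv ?_
    symm
    field_simp [(hP1pos y).ne', hB.ne', hA.ne']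
    ring
  have hderiv : deriv (fun y => P₂ y t / P₁ y t)
      = fun y => (P₂ y t / P₁ y t) * ((y - x₀) / (σ ^ 2 * t) - (y - x₀ * E) / B) :=
    funext fun y => (hDx y).deriv
  -- second spatial derivative
  have hlin : HasDerivAt (fun y => (y - x₀) / (σ ^ 2 * t) - (y - x₀ * E) / B)
      (1 / (σ ^ 2 * t) - 1 / B) x := by
    have h := (((hasDerivAt_id x).sub_const x₀).div_const (σ ^ 2 * t)).sub
      (((hasDerivAt_id x).sub_const (x₀ * E)).div_const B)
    exact h
  have hD2 : HasDerivAt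
      (fun y => (P₂ y t / P₁ y t) * ((y - x₀) / (σ ^ 2 * t) - (y - x₀ * E) / B))
      ((P₂ x t / P₁ x t) * ((x - x₀) / (σ ^ 2 * t) - (x - x₀ * E) / B) ^ 2
        + (P₂ x t / P₁ x t) * (1 / (σ ^ 2 * t) - 1 / B)) x := by
    have h := (hDx x).mul hlin
    refine h.congr_deriv ?_
    symm
    ring
  -- time derivative of P₁
  have hinv1 : HasDerivAt (fun s => 1 / Real.sqrt (2 * π * (σ ^ 2 * s)))
      (-(σ ^ 2 / (2 * (σ ^ 2 * t))) * (1 / Real.sqrt (2 * π * (σ ^ 2 * t)))) t := by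
    have hs : HasDerivAt (fun s => Real.sqrt (2 * π * (σ ^ 2 * s)))
        (2 * π * (σ ^ 2 * 1) / (2 * Real.sqrt (2 * π * (σ ^ 2 * t)))) t :=
      (((hasDerivAt_id t).const_mul (σ ^ 2)).const_mul (2 * π)).sqrt h2πA.ne'
    have h := hs.inv hsA.ne'
    simp only [one_div]
    refine h.congr_deriv ?_
    symm
    rw [Real.sq_sqrt h2πA.le]
    field_simp
  have hexp1 : HasDerivAt (fun s => Real.exp (-(x - x₀) ^ 2 / (2 * (σ ^ 2 * s))))
      (Real.exp (-(x - x₀) ^ 2 / (2 * (σ ^ 2 * t)))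
        * ((x - x₀) ^ 2 * σ ^ 2 / (2 * (σ ^ 2 * t) ^ 2))) t := by
    have hd : HasDerivAt (fun s => 2 * (σ ^ 2 * s)) (2 * (σ ^ 2 * 1)) t :=
      ((hasDerivAt_id t).const_mul (σ ^ 2)).const_mul 2
    have h := ((hasDerivAt_const t (-(x - x₀) ^ 2)).div hd (by positivity)).exp
    refine h.congr_deriv ?_
    symm
    simp only [Pi.div_apply]
    field_simp
    ring
  have h1t : HasDerivAt (fun s => P₁ x s)
      (P₁ x t * (-(σ ^ 2 / (2 * (σ ^ 2 * t)))
        + (x - x₀) ^ 2 * σ ^ 2 / (2 * (σ ^ 2 * t) ^ 2))) t := by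
    simp only [hP₁]
    have h := hinv1.mul hexp1
    refine h.congr_deriv ?_
    symm
    ring
  -- time derivative of P₂
  have hBfun : HasDerivAt (fun s => σ ^ 2 / (2 * β) * (1 - Real.exp (-2 * β * s)))
      (σ ^ 2 * (E * E)) t := by
    have he : HasDerivAt (fun s : ℝ => Real.exp (-2 * β * s)) (E * E * (-2 * β)) t := by
      have h := ((hasDerivAt_id t).const_mul (-2 * β)).exp
      refine h.congr_deriv ?_
      symm
      simp only [id_eq, hEE]
      ring
    have h := ((hasDerivAt_const t (1:ℝ)).sub he).const_mul (σ ^ 2 / (2 * β))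
    refine h.congr_deriv ?_
    symm
    field_simp
    ring
  have hinv2 : HasDerivAt
      (fun s => 1 / Real.sqrt (2 * π * (σ ^ 2 / (2 * β) * (1 - Real.exp (-2 * β * s)))))
      (-(σ ^ 2 * (E * E) / (2 * B)) * (1 / Real.sqrt (2 * π * B))) t := by
    have hs := (hBfun.const_mul (2 * π)).sqrt
      (by simp only [← hBdef]; exact h2πB.ne')
    have h := hs.inv (by simp only [← hBdef]; exact hsB.ne')
    simp only [← hBdef] at h
    simp only [one_div]
    refine h.congr_deriv ?_
    symm
    rw [Real.sq_sqrt h2πB.le]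
    field_simp
  have hexp2 : HasDerivAt
      (fun s => Real.exp (-(x - x₀ * Real.exp (-β * s)) ^ 2
          / (2 * (σ ^ 2 / (2 * β) * (1 - Real.exp (-2 * β * s))))))
      (Real.exp (-(x - x₀ * E) ^ 2 / (2 * B))
        * (-((x - x₀ * E) * (β * (x₀ * E))) / B
            + (x - x₀ * E) ^ 2 * (σ ^ 2 * (E * E)) / (2 * B ^ 2))) t := by
    have hm : HasDerivAt (fun s => x₀ * Real.exp (-β * s)) (x₀ * (E * -β)) t := by
      have h := (((hasDerivAt_id t).const_mul (-β)).exp).const_mul x₀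
      refine h.congr_deriv ?_
      symm
      simp only [id_eq, ← hEdef]
      ring
    have hnum2 := (((hasDerivAt_const t x).sub hm).pow 2).neg
    have hd := hBfun.const_mul (2:ℝ)
    have h := (hnum2.div hd (by simp only [← hBdef]; exact (mul_pos two_pos hB).ne')).exp
    simp only [Pi.div_apply, Pi.neg_apply, Pi.pow_apply, Pi.sub_apply] at h
    simp only [← hBdef, ← hEdef, id_eq] at h
    refine h.congr_deriv ?_
    symm
    field_simp
    ring
  have h2t : HasDerivAt (fun s => P₂ x s)
      (P₂ x t * (-(σ ^ 2 * (E * E) / (2 * B))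
        - (x - x₀ * E) * (β * (x₀ * E)) / B
        + (x - x₀ * E) ^ 2 * (σ ^ 2 * (E * E)) / (2 * B ^ 2))) t := by
    simp only [hP₂, ← hBdef, ← hEdef]
    have h := hinv2.mul hexp2
    refine h.congr_deriv ?_
    symm
    simp only [← hBdef, ← hEdef]
    ring
  -- assemble
  set L2 : ℝ := -(σ ^ 2 * (E * E) / (2 * B))
        - (x - x₀ * E) * (β * (x₀ * E)) / B
        + (x - x₀ * E) ^ 2 * (σ ^ 2 * (E * E)) / (2 * B ^ 2) with hL2
  set L1 : ℝ := -(σ ^ 2 / (2 * (σ ^ 2 * t)))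
        + (x - x₀) ^ 2 * σ ^ 2 / (2 * (σ ^ 2 * t) ^ 2) with hL1
  clear_value L2 L1
  have hVt := h2t.div h1t (hP1pos x).ne'
  have hscal : (β / (σ ^ 2 * t)) * ((σ ^ 2 * t) - x * (x - x₀))
      + ((β - σ ^ 2 / (σ ^ 2 * t)) * x + σ ^ 2 * x₀ / (σ ^ 2 * t))
          * ((x - x₀) / (σ ^ 2 * t) - (x - x₀ * E) / B)
      + (σ ^ 2 / 2) * (((x - x₀) / (σ ^ 2 * t) - (x - x₀ * E) / B) ^ 2
          + (1 / (σ ^ 2 * t) - 1 / B)) = L2 - L1 := by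
    rw [hL2, hL1, hBE]
    have hF : 1 - E ^ 2 ≠ 0 := by nlinarith
    field_simp [hβ.ne', hσ.ne', ht.ne', h1mE.ne']
    ring
  have hq : (P₂ x t * L2 * P₁ x t - P₂ x t * (P₁ x t * L1)) / P₁ x t ^ 2
      = (P₂ x t / P₁ x t) * (L2 - L1) := by
    field_simp [(hP1pos x).ne']
  refine hVt.congr_deriv ?_
  symm
  rw [hderiv, hD2.deriv]
  simp only []
  rw [hq, ← hscal]
  ring
end

section
/- Let β > 0, σ > 0, T > 0 and x₀ ∈ ℝ. For t > 0 and x ∈ ℝ let P₁(x,t) be the Gaussian density in x with mean x₀ and variance σ²t, and let P₂(x,t) be the Gaussian density in x with mean x₀e^{−βt} and variance (σ²/(2β))·(1 − e^{−2βt}). Then there exists a constant C > 0 (depending on β, σ, x₀ and T) such that for all x ∈ ℝ and all t ∈ (0, T], P₂(x,t) ≤ C·P₁(x,t). -/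
lemma aux1 (y : ℝ) : 1 - Real.exp (-y) ≤ y := by
  have := Real.add_one_le_exp (-y); linarith

lemma aux2 (y : ℝ) : y * Real.exp (-y) ≤ 1 - Real.exp (-y) := by
  have h1 := Real.add_one_le_exp y
  have h2 : Real.exp (-y) * Real.exp y = 1 := by
    rw [← Real.exp_add]; simp
  nlinarith [Real.exp_pos (-y)]

lemma aux3 (y : ℝ) (hy : 0 ≤ y) :
    y ^ 2 / 4 * Real.exp (-y) ≤ y - 1 + Real.exp (-y) := by
  rcases le_or_gt y 2 with hy2 | hy2
  · have h1 : (0:ℝ) ≤ 1 - y / 2 := by linarith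
    have h2 : 1 - y / 2 ≤ Real.exp (-(y / 2)) := by
      have := Real.add_one_le_exp (-(y / 2)); linarith
    have h3 : (1 - y / 2) ^ 2 ≤ Real.exp (-y) := by
      have h4 : Real.exp (-(y / 2)) * Real.exp (-(y / 2)) = Real.exp (-y) := by
        rw [← Real.exp_add]; ring_nf
      nlinarith
    have h5 : (0:ℝ) ≤ 1 - y ^ 2 / 4 := by nlinarith
    have h6 := mul_le_mul_of_nonneg_right h3 h5
    nlinarith [mul_nonneg (mul_nonneg (mul_nonneg hy hy) hy)
      (by linarith : (0:ℝ) ≤ 4 - y)]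
  · have h1 : (0:ℝ) ≤ 1 + y / 2 := by linarith
    have h2 : 1 + y / 2 ≤ Real.exp (y / 2) := by
      have := Real.add_one_le_exp (y / 2); linarith
    have h3 : Real.exp (-y) * (1 + y / 2) ^ 2 ≤ 1 := by
      have h4 : Real.exp (-y) * (Real.exp (y / 2) * Real.exp (y / 2)) = 1 := by
        rw [← Real.exp_add, ← Real.exp_add]; ring_nf; exact Real.exp_zero
      have h5 : (1 + y / 2) ^ 2 ≤ Real.exp (y / 2) * Real.exp (y / 2) := by
        have := (Real.exp_pos (y / 2)).le
        nlinarith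
      calc Real.exp (-y) * (1 + y / 2) ^ 2
          ≤ Real.exp (-y) * (Real.exp (y / 2) * Real.exp (y / 2)) :=
            mul_le_mul_of_nonneg_left h5 (Real.exp_pos (-y)).le
        _ = 1 := h4
    nlinarith [Real.exp_pos (-y), sq_nonneg y]

set_option maxHeartbeats 1000000 in
open Real in
/-- Boundedness of the quotient of the Ornstein–Uhlenbeck transition density
`P₂` over the Wiener transition density `P₁` on `ℝ × (0,T]` (assumption A1 of
the paper's rejection-sampling method). -/
theorem ou_over_wiener_density_bounded
    (β σ T x₀ : ℝ) (hβ : 0 < β) (hσ : 0 < σ) (hT : 0 < T)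
    (P₁ P₂ : ℝ → ℝ → ℝ)
    (hP₁ : ∀ x t, P₁ x t
      = (1 / Real.sqrt (2 * π * (σ ^ 2 * t)))
          * Real.exp (-(x - x₀) ^ 2 / (2 * (σ ^ 2 * t))))
    (hP₂ : ∀ x t, P₂ x t
      = (1 / Real.sqrt (2 * π * (σ ^ 2 / (2 * β) * (1 - Real.exp (-2 * β * t)))))
          * Real.exp (-(x - x₀ * Real.exp (-β * t)) ^ 2
              / (2 * (σ ^ 2 / (2 * β) * (1 - Real.exp (-2 * β * t)))))) :
    ∃ C : ℝ, 0 < C ∧ ∀ x : ℝ, ∀ t ∈ Set.Ioc (0 : ℝ) T, P₂ x t ≤ C * P₁ x t := by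
  obtain ⟨M, hMdef⟩ : ∃ m : ℝ, x₀ ^ 2 * β * Real.exp (4 * β * T) / σ ^ 2 = m :=
    ⟨_, rfl⟩
  have hM0 : 0 ≤ M := hMdef ▸ by positivity
  refine ⟨Real.exp (β * T) * Real.exp M, by positivity, ?_⟩
  rintro x t ⟨ht0, htT⟩
  rw [hP₁, hP₂]
  rw [show (-2 * β * t : ℝ) = -(2 * β * t) by ring,
      show (-β * t : ℝ) = -(β * t) by ring]
  obtain ⟨K, hKdef⟩ : ∃ k : ℝ, Real.exp (-(2 * β * T)) = k := ⟨_, rfl⟩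
  obtain ⟨E, hEdef⟩ : ∃ e : ℝ, Real.exp (-(2 * β * t)) = e := ⟨_, rfl⟩
  obtain ⟨F, hFdef⟩ : ∃ f : ℝ, Real.exp (-(β * t)) = f := ⟨_, rfl⟩
  rw [hEdef, hFdef]
  obtain ⟨s₁, hs1def⟩ : ∃ s : ℝ, σ ^ 2 * t = s := ⟨_, rfl⟩
  obtain ⟨s₂, hs2def⟩ : ∃ s : ℝ, σ ^ 2 / (2 * β) * (1 - E) = s := ⟨_, rfl⟩
  rw [hs1def, hs2def]
  have hKpos : 0 < K := hKdef ▸ Real.exp_pos _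
  have hEpos : 0 < E := hEdef ▸ Real.exp_pos _
  have hFpos : 0 < F := hFdef ▸ Real.exp_pos _
  have hs1pos : 0 < s₁ := by rw [← hs1def]; positivity
  have hEt : K ≤ E := by
    rw [← hKdef, ← hEdef]; exact Real.exp_le_exp.mpr (by nlinarith)
  have haux2 : 2 * β * t * E ≤ 1 - E := hEdef ▸ aux2 (2 * β * t)
  have haux3 : (2 * β * t) ^ 2 / 4 * E ≤ 2 * β * t - 1 + E :=
    hEdef ▸ aux3 (2 * β * t) (by positivity)
  have hs2lb : σ ^ 2 * t * K ≤ s₂ := by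
    rw [← hs2def]
    have key : σ ^ 2 / (2 * β) * (2 * β * t * E) = σ ^ 2 * t * E := by
      field_simp
    calc σ ^ 2 * t * K ≤ σ ^ 2 * t * E :=
          mul_le_mul_of_nonneg_left hEt (by positivity)
      _ = σ ^ 2 / (2 * β) * (2 * β * t * E) := key.symm
      _ ≤ σ ^ 2 / (2 * β) * (1 - E) :=
          mul_le_mul_of_nonneg_left haux2 (by positivity)
  have hs2pos : 0 < s₂ := lt_of_lt_of_le (by positivity) hs2lb
  have hdiff : σ ^ 2 * β / 2 * t ^ 2 * K ≤ s₁ - s₂ := by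
    have key2 : s₁ - s₂ = σ ^ 2 / (2 * β) * (2 * β * t - 1 + E) := by
      rw [← hs1def, ← hs2def]; field_simp; ring
    have key3 : σ ^ 2 / (2 * β) * ((2 * β * t) ^ 2 / 4 * E)
        = σ ^ 2 * β / 2 * t ^ 2 * E := by
      field_simp; ring
    calc σ ^ 2 * β / 2 * t ^ 2 * K
        ≤ σ ^ 2 * β / 2 * t ^ 2 * E :=
          mul_le_mul_of_nonneg_left hEt (by positivity)
      _ = σ ^ 2 / (2 * β) * ((2 * β * t) ^ 2 / 4 * E) := key3.symm
      _ ≤ σ ^ 2 / (2 * β) * (2 * β * t - 1 + E) :=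
          mul_le_mul_of_nonneg_left haux3 (by positivity)
      _ = s₁ - s₂ := key2.symm
  have hDpos : 0 < s₁ - s₂ := lt_of_lt_of_le (by positivity) hdiff
  obtain ⟨d, hddef⟩ : ∃ dd : ℝ, x₀ * F - x₀ = dd := ⟨_, rfl⟩
  have hd : d ^ 2 ≤ x₀ ^ 2 * β ^ 2 * t ^ 2 := by
    have h01 : F ≤ 1 := by
      rw [← hFdef]; exact Real.exp_le_one_iff.mpr (by nlinarith)
    have h02 : 1 - F ≤ β * t := hFdef ▸ aux1 (β * t)
    have h03 : (1 - F) ^ 2 ≤ (β * t) ^ 2 := by nlinarith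
    have h04 : d ^ 2 = x₀ ^ 2 * (1 - F) ^ 2 := by rw [← hddef]; ring
    calc d ^ 2 = x₀ ^ 2 * (1 - F) ^ 2 := h04
      _ ≤ x₀ ^ 2 * (β * t) ^ 2 := mul_le_mul_of_nonneg_left h03 (sq_nonneg x₀)
      _ = x₀ ^ 2 * β ^ 2 * t ^ 2 := by ring
  have ineq1 : (x - x₀) ^ 2 * s₂ * (s₁ - s₂)
      - (x - x₀ * F) ^ 2 * s₁ * (s₁ - s₂) ≤ d ^ 2 * s₁ ^ 2 := by
    have hxm : x - x₀ * F = (x - x₀) - d := by rw [← hddef]; ring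
    rw [hxm]
    have hid : d ^ 2 * s₁ ^ 2
        - ((x - x₀) ^ 2 * s₂ * (s₁ - s₂) - ((x - x₀) - d) ^ 2 * s₁ * (s₁ - s₂))
        = ((s₁ - s₂) * (x - x₀) - s₁ * d) ^ 2 + d ^ 2 * s₁ * (s₁ - s₂) := by
      ring
    have hnn1 := sq_nonneg ((s₁ - s₂) * (x - x₀) - s₁ * d)
    have hnn2 := mul_nonneg (mul_nonneg (sq_nonneg d) hs1pos.le) hDpos.le
    linarith
  have hKK : K * K * Real.exp (4 * β * T) = 1 := by
    rw [← hKdef, ← Real.exp_add, ← Real.exp_add]; ring_nf; exact Real.exp_zero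
  have h2 : d ^ 2 * s₁ ≤ 2 * s₂ * (s₁ - s₂) * M := by
    have ha : d ^ 2 * s₁ ≤ x₀ ^ 2 * β ^ 2 * t ^ 2 * s₁ :=
      mul_le_mul_of_nonneg_right hd hs1pos.le
    have hb : (σ ^ 2 * t * K) * (σ ^ 2 * β / 2 * t ^ 2 * K) ≤ s₂ * (s₁ - s₂) :=
      mul_le_mul hs2lb hdiff (by positivity) hs2pos.le
    have hc : 2 * ((σ ^ 2 * t * K) * (σ ^ 2 * β / 2 * t ^ 2 * K)) * M
        = x₀ ^ 2 * β ^ 2 * t ^ 2 * s₁ := by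
      rw [← hMdef, ← hs1def]
      field_simp
      have hKK' : K * K * Real.exp (β * 4 * T) = 1 := by
        rw [show β * 4 * T = 4 * β * T by ring]; exact hKK
      linear_combination x₀ ^ 2 * hKK'
    calc d ^ 2 * s₁ ≤ x₀ ^ 2 * β ^ 2 * t ^ 2 * s₁ := ha
      _ = 2 * ((σ ^ 2 * t * K) * (σ ^ 2 * β / 2 * t ^ 2 * K)) * M := hc.symm
      _ ≤ 2 * (s₂ * (s₁ - s₂)) * M :=
          mul_le_mul_of_nonneg_right (by linarith) hM0
      _ = 2 * s₂ * (s₁ - s₂) * M := by ring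
  have h3 : (x - x₀) ^ 2 / (2 * s₁) - (x - x₀ * F) ^ 2 / (2 * s₂) ≤ M := by
    rw [div_sub_div _ _ (by positivity : (2 * s₁) ≠ 0)
        (by positivity : (2 * s₂) ≠ 0), div_le_iff₀ (by positivity)]
    have key : ((x - x₀) ^ 2 * (2 * s₂) - 2 * s₁ * (x - x₀ * F) ^ 2) * (s₁ - s₂)
        ≤ M * (2 * s₁ * (2 * s₂)) * (s₁ - s₂) := by
      have e1 : ((x - x₀) ^ 2 * (2 * s₂) - 2 * s₁ * (x - x₀ * F) ^ 2) * (s₁ - s₂)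
          = 2 * ((x - x₀) ^ 2 * s₂ * (s₁ - s₂)
              - (x - x₀ * F) ^ 2 * s₁ * (s₁ - s₂)) := by ring
      have e2 : M * (2 * s₁ * (2 * s₂)) * (s₁ - s₂)
          = 2 * (2 * s₂ * (s₁ - s₂) * M * s₁) := by ring
      have e3 : d ^ 2 * s₁ ^ 2 = d ^ 2 * s₁ * s₁ := by ring
      have h2' := mul_le_mul_of_nonneg_right h2 hs1pos.le
      rw [e1, e2]
      linarith
    exact le_of_mul_le_mul_right key hDpos
  have hexp : Real.exp (-(x - x₀ * F) ^ 2 / (2 * s₂))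
      ≤ Real.exp M * Real.exp (-(x - x₀) ^ 2 / (2 * s₁)) := by
    rw [← Real.exp_add]
    apply Real.exp_le_exp.mpr
    have e1 : -(x - x₀ * F) ^ 2 / (2 * s₂) = -((x - x₀ * F) ^ 2 / (2 * s₂)) :=
      neg_div _ _
    have e2 : -(x - x₀) ^ 2 / (2 * s₁) = -((x - x₀) ^ 2 / (2 * s₁)) := neg_div _ _
    rw [e1, e2]; linarith
  have hsq : (1 : ℝ) / Real.sqrt (2 * π * s₂)
      ≤ Real.exp (β * T) * (1 / Real.sqrt (2 * π * s₁)) := by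
    have hA : 0 < Real.sqrt (2 * π * s₂) := Real.sqrt_pos.mpr (by positivity)
    have hB : 0 < Real.sqrt (2 * π * s₁) := Real.sqrt_pos.mpr (by positivity)
    have hKe : Real.exp (2 * β * T) * K = 1 := by
      rw [← hKdef, ← Real.exp_add]; ring_nf; exact Real.exp_zero
    have hle : Real.sqrt (2 * π * s₁)
        ≤ Real.exp (β * T) * Real.sqrt (2 * π * s₂) := by
      have hsE : Real.sqrt (Real.exp (2 * β * T)) = Real.exp (β * T) := by
        rw [show (2 * β * T : ℝ) = β * T + β * T by ring, Real.exp_add,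
          Real.sqrt_mul_self (Real.exp_pos _).le]
      have he : Real.exp (β * T) * Real.sqrt (2 * π * s₂)
          = Real.sqrt (Real.exp (2 * β * T) * (2 * π * s₂)) := by
        rw [Real.sqrt_mul (Real.exp_pos _).le, hsE]
      rw [he]
      apply Real.sqrt_le_sqrt
      have h5 := mul_le_mul_of_nonneg_left hs2lb (Real.exp_pos (2 * β * T)).le
      have h6 : Real.exp (2 * β * T) * (σ ^ 2 * t * K) = σ ^ 2 * t := by
        calc Real.exp (2 * β * T) * (σ ^ 2 * t * K)
            = (Real.exp (2 * β * T) * K) * (σ ^ 2 * t) := by ring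
          _ = σ ^ 2 * t := by rw [hKe, one_mul]
      rw [← hs1def]
      nlinarith [Real.pi_pos]
    rw [mul_one_div, div_le_div_iff₀ hA hB, one_mul]
    linarith
  calc (1 / Real.sqrt (2 * π * s₂)) * Real.exp (-(x - x₀ * F) ^ 2 / (2 * s₂))
      ≤ (Real.exp (β * T) * (1 / Real.sqrt (2 * π * s₁)))
        * (Real.exp M * Real.exp (-(x - x₀) ^ 2 / (2 * s₁))) :=
        mul_le_mul hsq hexp (Real.exp_pos _).le (by positivity)
    _ = Real.exp (β * T) * Real.exp M
        * (1 / Real.sqrt (2 * π * s₁) * Real.exp (-(x - x₀) ^ 2 / (2 * s₁))) := by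
        ring
end
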